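/- Let S be an integrable stopping time with respect to a filtration (F_i), and let (X_i)_{i≥1} be a random process over the non-negative extended reals such that Σ_{i=1}^{S} X_i is integrable and there exists c ∈ ℝ with E[|X_{i+1} − E[X_{i+1}|F_i]| | F_i]·1{i < S} ≤ c for all i ∈ ℕ. Then E[Σ_{i=1}^{S} X_i | F_0] = E[Σ_{i=1}^{S} E[X_i | F_{i−1}] | F_0]. -/

import Mathlib

open MeasureTheory Filter Set

private lemma sum_Icc_eq_tsum (v : ℕ → ENNReal) (n : ℕ) :
    ∑ i ∈ Finset.Icc 1 n, v i = ∑' i : ℕ, if i < n then v (i + 1) else 0 := by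
  have h : ∑ i ∈ Finset.Icc 1 n, v i = ∑ i ∈ Finset.range n, v (i + 1) := by
    induction n with
    | zero => simp
    | succ n ih =>
      rw [Finset.sum_Icc_succ_top (by omega), ih, Finset.sum_range_succ]
  rw [h, tsum_eq_sum (s := Finset.range n)
    (fun i hi => if_neg (by simpa using hi))]
  exact Finset.sum_congr rfl fun i hi => (if_pos (Finset.mem_range.mp hi)).symm

/-- Generalized Wald's equation. -/
theorem generalized_wald
    {Ω : Type*} {m0 : MeasurableSpace Ω} (μ : Measure Ω) [IsProbabilityMeasure μ]
    (ℱ : Filtration ℕ m0) (X : ℕ → Ω → ℝ) (S : Ω → ℕ)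
    (hS : IsStoppingTime ℱ (fun ω => (S ω : WithTop ℕ)))
    (hSint : Integrable (fun ω => (S ω : ℝ)) μ)
    (hXnonneg : ∀ i ω, 1 ≤ i → 0 ≤ X i ω)
    (hXint : ∀ i, Integrable (X i) μ)
    (hsumint : Integrable (fun ω => ∑ i ∈ Finset.Icc 1 (S ω), X i ω) μ)
    (c : ℝ)
    (hbdd : ∀ i : ℕ, ∀ᵐ ω ∂μ,
      (μ[fun ω' => |X (i + 1) ω' - (μ[X (i + 1) | ℱ i]) ω'| | ℱ i]) ω *
          Set.indicator {ω' | i < S ω'} (fun _ => (1 : ℝ)) ω ≤ c) :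
    (μ[fun ω => ∑ i ∈ Finset.Icc 1 (S ω), X i ω | ℱ 0]) =ᵐ[μ]
      (μ[fun ω => ∑ i ∈ Finset.Icc 1 (S ω), (μ[X i | ℱ (i - 1)]) ω | ℱ 0]) := by
  have hle : ∀ i, ℱ i ≤ m0 := fun i => ℱ.le i
  set f : Ω → ℝ := fun ω => ∑ i ∈ Finset.Icc 1 (S ω), X i ω with hfdef
  set g : Ω → ℝ := fun ω => ∑ i ∈ Finset.Icc 1 (S ω), (μ[X i | ℱ (i - 1)]) ω with hgdef
  -- measurability of S
  have hSmeas : Measurable S := by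
    apply measurable_to_countable'
    intro n
    convert hle n _ (hS.measurableSet_eq n) using 1; ext ω; simp
  have hSlt : ∀ i : ℕ, MeasurableSet[ℱ i] {ω | i < S ω} := by
    intro i
    have h := (hS i).compl
    have : {ω | (S ω : WithTop ℕ) ≤ (i : WithTop ℕ)}ᶜ = {ω | i < S ω} := by
      ext ω; simp [not_le]
    rw [← this]; exact h
  -- measurability of g
  have hCmeas : ∀ i, Measurable (μ[X i | ℱ (i - 1)]) := fun i =>
    (stronglyMeasurable_condExp.mono (hle (i - 1))).measurable
  have hgmeas : Measurable g := by
    have h : Measurable fun p : Ω × ℕ => ∑ i ∈ Finset.Icc 1 p.2, (μ[X i | ℱ (i - 1)]) p.1 := by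
      apply measurable_from_prod_countable_left
      intro n
      show Measurable fun x : Ω => ∑ i ∈ Finset.Icc 1 n, (μ[X i | ℱ (i - 1)]) x
      exact Finset.measurable_sum _ fun i _ => hCmeas i
    exact h.comp (measurable_id.prodMk hSmeas)
  -- nonnegativity
  have hfnn : ∀ ω, 0 ≤ f ω := fun ω =>
    Finset.sum_nonneg fun i hi => hXnonneg i ω (Finset.mem_Icc.mp hi).1
  have hcnn : ∀ᵐ ω ∂μ, ∀ i : ℕ, 0 ≤ (μ[X (i + 1) | ℱ i]) ω := by
    rw [ae_all_iff]
    intro i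
    exact condExp_nonneg (Eventually.of_forall fun ω => hXnonneg (i + 1) ω (Nat.le_add_left 1 i))
  have hgnn : 0 ≤ᵐ[μ] g := by
    filter_upwards [hcnn] with ω hω
    refine Finset.sum_nonneg fun i hi => ?_
    have h1 : 1 ≤ i := (Finset.mem_Icc.mp hi).1
    have h2 : i - 1 + 1 = i := Nat.succ_pred_eq_of_pos h1
    have := hω (i - 1)
    rwa [h2] at this
  -- termwise set-lintegral equality
  have term_eq : ∀ (A : Set Ω), MeasurableSet[ℱ 0] A → ∀ i : ℕ,
      ∫⁻ ω in {ω | i < S ω} ∩ A, ENNReal.ofReal (X (i + 1) ω) ∂μ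
        = ∫⁻ ω in {ω | i < S ω} ∩ A, ENNReal.ofReal ((μ[X (i + 1) | ℱ i]) ω) ∂μ := by
    intro A hA i
    have hB : MeasurableSet[ℱ i] ({ω | i < S ω} ∩ A) :=
      (hSlt i).inter ((ℱ.mono (Nat.zero_le i)) _ hA)
    have hB0 : MeasurableSet ({ω | i < S ω} ∩ A) := hle i _ hB
    have hXnn : 0 ≤ᵐ[μ.restrict ({ω | i < S ω} ∩ A)] X (i + 1) :=
      Eventually.of_forall fun ω => hXnonneg (i + 1) ω (Nat.le_add_left 1 i)
    have hCnn : 0 ≤ᵐ[μ.restrict ({ω | i < S ω} ∩ A)] (μ[X (i + 1) | ℱ i]) :=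
      ae_restrict_of_ae (condExp_nonneg
        (Eventually.of_forall fun ω => hXnonneg (i + 1) ω (Nat.le_add_left 1 i)))
    rw [← ofReal_integral_eq_lintegral_ofReal ((hXint (i + 1)).restrict) hXnn,
      ← ofReal_integral_eq_lintegral_ofReal (integrable_condExp.restrict) hCnn,
      setIntegral_condExp (hle i) (hXint (i + 1)) hB]
  -- sum decomposition
  have sumF : ∀ (A : Set Ω), MeasurableSet A →
      ∫⁻ ω in A, ENNReal.ofReal (f ω) ∂μ
        = ∑' i : ℕ, ∫⁻ ω in {ω | i < S ω} ∩ A, ENNReal.ofReal (X (i + 1) ω) ∂μ := by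
    intro A hA
    have hpt : ∀ ω, ENNReal.ofReal (f ω)
        = ∑' i : ℕ, ({ω' | i < S ω'}).indicator
            (fun ω => ENNReal.ofReal (X (i + 1) ω)) ω := by
      intro ω
      rw [hfdef]
      rw [ENNReal.ofReal_sum_of_nonneg fun i hi => hXnonneg i ω (Finset.mem_Icc.mp hi).1,
        sum_Icc_eq_tsum (fun i => ENNReal.ofReal (X i ω)) (S ω)]
      exact tsum_congr fun i => by rw [Set.indicator_apply]; rfl
    simp_rw [hpt]
    rw [lintegral_tsum (f := fun i => ({ω' | i < S ω'}).indicator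
        (fun ω => ENNReal.ofReal (X (i + 1) ω)))
      (fun i => ((AEMeasurable.indicator (by
        exact ENNReal.measurable_ofReal.comp_aemeasurable (hXint (i + 1)).1.aemeasurable)
        (hle i _ (hSlt i))).restrict))]
    exact tsum_congr fun i => setLIntegral_indicator (hle i _ (hSlt i)) _
  have sumG : ∀ (A : Set Ω), MeasurableSet A →
      ∫⁻ ω in A, ENNReal.ofReal (g ω) ∂μ
        = ∑' i : ℕ, ∫⁻ ω in {ω | i < S ω} ∩ A,
            ENNReal.ofReal ((μ[X (i + 1) | ℱ i]) ω) ∂μ := by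
    intro A hA
    have hpt : ∀ᵐ ω ∂μ.restrict A, ENNReal.ofReal (g ω)
        = ∑' i : ℕ, ({ω' | i < S ω'}).indicator
            (fun ω => ENNReal.ofReal ((μ[X (i + 1) | ℱ i]) ω)) ω := by
      refine ae_restrict_of_ae ?_
      filter_upwards [hcnn] with ω hω
      rw [hgdef]
      have hnn : ∀ i ∈ Finset.Icc 1 (S ω), 0 ≤ (μ[X i | ℱ (i - 1)]) ω := by
        intro i hi
        have h1 : 1 ≤ i := (Finset.mem_Icc.mp hi).1
        have h2 : i - 1 + 1 = i := Nat.succ_pred_eq_of_pos h1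
        have := hω (i - 1)
        rwa [h2] at this
      rw [ENNReal.ofReal_sum_of_nonneg hnn,
        sum_Icc_eq_tsum (fun i => ENNReal.ofReal ((μ[X i | ℱ (i - 1)]) ω)) (S ω)]
      exact tsum_congr fun i => by rw [Set.indicator_apply]; rfl
    rw [lintegral_congr_ae hpt]
    rw [lintegral_tsum (f := fun i => ({ω' | i < S ω'}).indicator
        (fun ω => ENNReal.ofReal ((μ[X (i + 1) | ℱ i]) ω)))
      (fun i => ((Measurable.indicator (by
        exact ENNReal.measurable_ofReal.comp (hCmeas (i + 1)))
        (hle i _ (hSlt i))).aemeasurable.restrict))]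
    exact tsum_congr fun i => setLIntegral_indicator (hle i _ (hSlt i)) _
  -- key lintegral equality
  have key : ∀ (A : Set Ω), MeasurableSet[ℱ 0] A →
      ∫⁻ ω in A, ENNReal.ofReal (f ω) ∂μ = ∫⁻ ω in A, ENNReal.ofReal (g ω) ∂μ := by
    intro A hA
    rw [sumF A (hle 0 _ hA), sumG A (hle 0 _ hA)]
    exact tsum_congr fun i => term_eq A hA i
  -- finiteness
  have hfin : ∫⁻ ω, ENNReal.ofReal (f ω) ∂μ < ⊤ := by
    rw [← ofReal_integral_eq_lintegral_ofReal hsumint (Eventually.of_forall hfnn)]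
    exact ENNReal.ofReal_lt_top
  -- integrability of g
  have hgint : Integrable g μ := by
    refine ⟨hgmeas.aestronglyMeasurable, ?_⟩
    rw [hasFiniteIntegral_iff_ofReal hgnn]
    have := key univ MeasurableSet.univ
    rw [Measure.restrict_univ] at this
    rw [← this]
    exact hfin
  -- real set-integral equality
  have keyR : ∀ (A : Set Ω), MeasurableSet[ℱ 0] A →
      ∫ ω in A, g ω ∂μ = ∫ ω in A, f ω ∂μ := by
    intro A hA
    rw [integral_eq_lintegral_of_nonneg_ae (ae_restrict_of_ae hgnn)
        (hgmeas.aestronglyMeasurable.restrict),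
      integral_eq_lintegral_of_nonneg_ae (ae_restrict_of_ae (Eventually.of_forall hfnn))
        (hsumint.1.restrict),
      key A hA]
  -- conclude via uniqueness of conditional expectation
  have h := ae_eq_condExp_of_forall_setIntegral_eq (ℱ.le 0) hsumint
    (fun s _ _ => integrable_condExp.integrableOn)
    (fun s hs _ => by
      rw [setIntegral_condExp (ℱ.le 0) hgint hs]
      exact keyR s hs)
    stronglyMeasurable_condExp.aestronglyMeasurable
  exact h.symm
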